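/- Let v_∞ = span(e₁,…,e_m) ⊂ ℂ^{m+n} with the Hermitian form h given by [[0,0,Id],[0,-Id,0],[Id,0,0]]. The map A ↦ (column span of [A*; Id_{n-m}; 0])^⊥ is a bijection from M((n-m)×m, ℂ) onto the set of 2m-dimensional subspaces V of ℂ^{m+n} containing v_∞ such that h|_V has signature (m,m). -/

import Mathlib

open Matrix Module

/-- The Hermitian pairing `h(u,v) = u* H v` associated to a matrix `H`. -/
noncomputable def sform {ι : Type*} [Fintype ι] (H : Matrix ι ι ℂ) (u v : ι → ℂ) : ℂ :=
  star u ⬝ᵥ H.mulVec v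

/-- The orthogonal complement `V^⊥ = {w : h(w,v) = 0 for all v ∈ V}` with respect to the
Hermitian form given by the matrix `H`. -/
noncomputable def hperp {ι : Type*} [Fintype ι] (H : Matrix ι ι ℂ) (V : Submodule ℂ (ι → ℂ)) :
    Submodule ℂ (ι → ℂ) where
  carrier := {w | ∀ v ∈ V, star w ⬝ᵥ H.mulVec v = 0}
  zero_mem' := by intro v hv; simp
  add_mem' := by
    intro a b ha hb v hv
    have h1 := ha v hv
    have h2 := hb v hv
    simp only [star_add, add_dotProduct, h1, h2, add_zero]
  smul_mem' := by
    intro c a ha v hv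
    have h1 := ha v hv
    simp only [star_smul, smul_dotProduct, h1, smul_zero]

/-- The restriction of the Hermitian form given by `H` to the subspace `W` has
signature `(p, q)`. -/
noncomputable def SigOn {ι : Type*} [Fintype ι] (H : Matrix ι ι ℂ)
    (W : Submodule ℂ (ι → ℂ)) (p q : ℕ) : Prop :=
  ∃ P N : Submodule ℂ (ι → ℂ), P ≤ W ∧ N ≤ W ∧
    finrank ℂ P = p ∧ finrank ℂ N = q ∧
    (∀ v ∈ P, v ≠ 0 → 0 < (sform H v v).re) ∧
    (∀ v ∈ N, v ≠ 0 → (sform H v v).re < 0) ∧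
    P ⊓ N = ⊥ ∧ P ⊔ N = W


/-- The Hermitian form of signature `(m, n)` (with `l = n - m`) on `ℂ^{m+n}` given by the
block matrix `[[0,0,1],[0,-1,0],[1,0,0]]` with blocks of sizes `m`, `l`, `m`. -/
def Hmat (m l : ℕ) :
    Matrix (Fin m ⊕ (Fin l ⊕ Fin m)) (Fin m ⊕ (Fin l ⊕ Fin m)) ℂ :=
  fromBlocks 0 (fromCols 0 1) (fromRows 0 1) (fromBlocks (-1) 0 0 0)

/-- The maximal isotropic subspace `v_∞ = span(e₁,…,e_m)`, realized as the column span of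
the stacked matrix `[1; 0; 0]`. -/
noncomputable def vinf (m l : ℕ) : Submodule ℂ ((Fin m ⊕ (Fin l ⊕ Fin m)) → ℂ) :=
  LinearMap.range (Matrix.mulVecLin
    (fromRows (1 : Matrix (Fin m) (Fin m) ℂ)
      (fromRows (0 : Matrix (Fin l) (Fin m) ℂ) (0 : Matrix (Fin m) (Fin m) ℂ))))

namespace Stmt12Aux
open Sum
variable {m l : ℕ}

def bld (a : Fin m → ℂ) (b : Fin l → ℂ) (c : Fin m → ℂ) : (Fin m ⊕ (Fin l ⊕ Fin m)) → ℂ :=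
  Sum.elim a (Sum.elim b c)

lemma mem_vinf (v : (Fin m ⊕ (Fin l ⊕ Fin m)) → ℂ) :
    v ∈ vinf m l ↔ (∀ j, v (inr (inl j)) = 0) ∧ (∀ i, v (inr (inr i)) = 0) := by
  constructor
  · rintro ⟨x, rfl⟩
    constructor <;> intro t <;> simp [mulVecLin_apply, fromRows_mulVec]
  · rintro ⟨h2, h3⟩
    refine ⟨fun i => v (inl i), ?_⟩
    funext x
    rcases x with i | (j | i) <;>
      simp [mulVecLin_apply, fromRows_mulVec, one_mulVec, h2, h3]

noncomputable def FA (m l : ℕ) (A : Matrix (Fin l) (Fin m) ℂ) :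
    Submodule ℂ ((Fin m ⊕ (Fin l ⊕ Fin m)) → ℂ) :=
  hperp (Hmat m l) (LinearMap.range (Matrix.mulVecLin
    (fromRows Aᴴ (fromRows (1 : Matrix (Fin l) (Fin l) ℂ)
      (0 : Matrix (Fin m) (Fin l) ℂ)))))

lemma Hmat_mulVec (v : (Fin m ⊕ (Fin l ⊕ Fin m)) → ℂ) :
    (Hmat m l) *ᵥ v = bld (fun i => v (inr (inr i))) (fun j => -v (inr (inl j)))
      (fun i => v (inl i)) := by
  funext x
  rcases x with i | (j | i) <;>
    simp [Hmat, bld, mulVec, dotProduct, Fintype.sum_sum_type,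
      one_apply]

@[simp] lemma bld_inl (a : Fin m → ℂ) (b : Fin l → ℂ) (c : Fin m → ℂ) (i : Fin m) :
    bld a b c (inl i) = a i := rfl
@[simp] lemma bld_inrl (a : Fin m → ℂ) (b : Fin l → ℂ) (c : Fin m → ℂ) (j : Fin l) :
    bld a b c (inr (inl j)) = b j := rfl
@[simp] lemma bld_inrr (a : Fin m → ℂ) (b : Fin l → ℂ) (c : Fin m → ℂ) (i : Fin m) :
    bld a b c (inr (inr i)) = c i := rfl

lemma dot_star_bld (w : (Fin m ⊕ (Fin l ⊕ Fin m)) → ℂ) (a : Fin m → ℂ) (b : Fin l → ℂ)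
    (c : Fin m → ℂ) :
    star w ⬝ᵥ bld a b c = (star fun i => w (inl i)) ⬝ᵥ a +
      (star fun j => w (inr (inl j))) ⬝ᵥ b + (star fun i => w (inr (inr i))) ⬝ᵥ c := by
  simp [bld, dotProduct, Fintype.sum_sum_type, add_assoc]

lemma pairing_eval (A : Matrix (Fin l) (Fin m) ℂ) (w : (Fin m ⊕ (Fin l ⊕ Fin m)) → ℂ)
    (y : Fin l → ℂ) :
    star w ⬝ᵥ (Hmat m l) *ᵥ ((fromRows Aᴴ (fromRows (1 : Matrix (Fin l) (Fin l) ℂ)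
      (0 : Matrix (Fin m) (Fin l) ℂ))) *ᵥ y) =
      ((star (A *ᵥ fun i => w (inr (inr i)))) - (star fun j => w (inr (inl j)))) ⬝ᵥ y := by
  have h1 : (fromRows Aᴴ (fromRows (1 : Matrix (Fin l) (Fin l) ℂ)
      (0 : Matrix (Fin m) (Fin l) ℂ))) *ᵥ y = bld (Aᴴ *ᵥ y) y 0 := by
    simp [fromRows_mulVec, bld]
  rw [h1, Hmat_mulVec]
  simp only [bld_inl, bld_inrl, bld_inrr, Pi.zero_apply]
  rw [dot_star_bld]
  have h2 : (star fun i => w (inr (inr i))) ⬝ᵥ (fun i => (Aᴴ *ᵥ y) i) =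
      (star (A *ᵥ fun i => w (inr (inr i)))) ⬝ᵥ y := by
    rw [Matrix.star_mulVec, show (fun i => (Aᴴ *ᵥ y) i) = Aᴴ *ᵥ y from rfl,
      Matrix.dotProduct_mulVec]
  rw [h2, sub_dotProduct]
  have h3 : (star fun j => w (inr (inl j))) ⬝ᵥ (fun j => -y j) =
      -((star fun j => w (inr (inl j))) ⬝ᵥ y) := by
    simp [dotProduct, mul_neg]
  rw [h3]
  simp
  ring


lemma mem_hperp {ι : Type*} [Fintype ι] (H : Matrix ι ι ℂ) (V : Submodule ℂ (ι → ℂ))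
    (w : ι → ℂ) : w ∈ hperp H V ↔ ∀ v ∈ V, star w ⬝ᵥ H.mulVec v = 0 := Iff.rfl

lemma mem_FA (A : Matrix (Fin l) (Fin m) ℂ) (w : (Fin m ⊕ (Fin l ⊕ Fin m)) → ℂ) :
    w ∈ FA m l A ↔ (fun j => w (inr (inl j))) = A *ᵥ (fun i => w (inr (inr i))) := by
  rw [FA, mem_hperp]
  constructor
  · intro h
    funext j
    have hm : (fromRows Aᴴ (fromRows (1 : Matrix (Fin l) (Fin l) ℂ)
        (0 : Matrix (Fin m) (Fin l) ℂ))).mulVecLin (Pi.single j 1) ∈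
        LinearMap.range (Matrix.mulVecLin (fromRows Aᴴ (fromRows (1 : Matrix (Fin l) (Fin l) ℂ)
        (0 : Matrix (Fin m) (Fin l) ℂ)))) := ⟨Pi.single j 1, rfl⟩
    have := h _ hm
    rw [mulVecLin_apply, pairing_eval, dotProduct_single, mul_one, Pi.sub_apply,
      Pi.star_apply, Pi.star_apply, sub_eq_zero] at this
    exact star_injective this.symm
  · intro h v hv
    obtain ⟨y, rfl⟩ := hv
    rw [mulVecLin_apply, pairing_eval, h, sub_self, zero_dotProduct]

noncomputable def phiA (A : Matrix (Fin l) (Fin m) ℂ) :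
    ((Fin m → ℂ) × (Fin m → ℂ)) →ₗ[ℂ] ((Fin m ⊕ (Fin l ⊕ Fin m)) → ℂ) where
  toFun p := bld p.1 (A *ᵥ p.2) p.2
  map_add' p q := by
    funext x; rcases x with i | (j | i) <;> simp [bld, Matrix.mulVec_add]
  map_smul' c p := by
    funext x; rcases x with i | (j | i) <;> simp [bld, Matrix.mulVec_smul]

lemma phiA_inj (A : Matrix (Fin l) (Fin m) ℂ) : Function.Injective (phiA A) := by
  intro p q h
  have h1 : ∀ i, p.1 i = q.1 i := fun i => congrFun h (inl i)
  have h3 : ∀ i, p.2 i = q.2 i := fun i => congrFun h (inr (inr i))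
  exact Prod.ext (funext h1) (funext h3)

lemma range_phiA (A : Matrix (Fin l) (Fin m) ℂ) : LinearMap.range (phiA A) = FA m l A := by
  ext w
  constructor
  · rintro ⟨⟨u, c⟩, rfl⟩
    rw [mem_FA]
    rfl
  · intro hw
    refine ⟨⟨fun i => w (inl i), fun i => w (inr (inr i))⟩, ?_⟩
    funext x
    rcases x with i | (j | i)
    · rfl
    · exact (congrFun ((mem_FA A w).mp hw) j).symm
    · rfl

lemma finrank_FA (A : Matrix (Fin l) (Fin m) ℂ) : finrank ℂ (FA m l A) = 2 * m := by
  rw [← range_phiA, LinearMap.finrank_range_of_inj (phiA_inj A)]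
  simp [finrank_prod]
  ring

lemma finrank_vinf : finrank ℂ (vinf m l) = m := by
  rw [vinf, LinearMap.finrank_range_of_inj]
  · simp
  · intro x y h
    funext i
    have := congrFun h (inl i)
    simpa [mulVecLin_apply, fromRows_mulVec] using this

lemma re_dot_nonneg {n : Type*} [Fintype n] (u : n → ℂ) : 0 ≤ (star u ⬝ᵥ u).re := by
  rw [dotProduct, Complex.re_sum]
  refine Finset.sum_nonneg fun i _ => ?_
  have : star u i * u i = (Complex.normSq (u i) : ℂ) := by
    simp [Pi.star_apply, mul_comm, Complex.mul_conj]
  rw [this, Complex.ofReal_re]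
  exact Complex.normSq_nonneg _

lemma re_dot_pos {n : Type*} [Fintype n] (u : n → ℂ) (hu : u ≠ 0) : 0 < (star u ⬝ᵥ u).re := by
  rw [dotProduct, Complex.re_sum]
  obtain ⟨i, hi⟩ : ∃ i, u i ≠ 0 := by
    by_contra h
    push_neg at h
    exact hu (funext h)
  refine Finset.sum_pos' (fun j _ => ?_) ⟨i, Finset.mem_univ i, ?_⟩
  · have : star u j * u j = (Complex.normSq (u j) : ℂ) := by
      simp [Pi.star_apply, mul_comm, Complex.mul_conj]
    rw [this, Complex.ofReal_re]
    exact Complex.normSq_nonneg _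
  · have : star u i * u i = (Complex.normSq (u i) : ℂ) := by
      simp [Pi.star_apply, mul_comm, Complex.mul_conj]
    rw [this, Complex.ofReal_re]
    exact Complex.normSq_pos.mpr hi

noncomputable def psi (A : Matrix (Fin l) (Fin m) ℂ) (ε : ℂ) :
    (Fin m → ℂ) →ₗ[ℂ] ((Fin m ⊕ (Fin l ⊕ Fin m)) → ℂ) where
  toFun u := bld (ε • u + (1/2 : ℂ) • (Aᴴ *ᵥ (A *ᵥ u))) (A *ᵥ u) u
  map_add' u v := by
    funext x
    rcases x with i | (j | i) <;>
      simp [bld, Matrix.mulVec_add, smul_eq_mul, mul_add] <;> ring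
  map_smul' c u := by
    funext x
    rcases x with i | (j | i) <;>
      simp [bld, Matrix.mulVec_smul, smul_eq_mul] <;> ring

lemma psi_apply (A : Matrix (Fin l) (Fin m) ℂ) (ε : ℂ) (u : Fin m → ℂ) :
    psi A ε u = bld (ε • u + (1/2 : ℂ) • (Aᴴ *ᵥ (A *ᵥ u))) (A *ᵥ u) u := rfl

lemma star_bld (a : Fin m → ℂ) (b : Fin l → ℂ) (c : Fin m → ℂ) :
    star (bld a b c) = bld (star a) (star b) (star c) := by
  funext x; rcases x with i | (j | i) <;> rfl

lemma bld_dot (a a' : Fin m → ℂ) (b b' : Fin l → ℂ) (c c' : Fin m → ℂ) :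
    bld a b c ⬝ᵥ bld a' b' c' = a ⬝ᵥ a' + b ⬝ᵥ b' + c ⬝ᵥ c' := by
  simp [bld, dotProduct, Fintype.sum_sum_type, add_assoc]

lemma sform_bld (a a' : Fin m → ℂ) (b b' : Fin l → ℂ) (c c' : Fin m → ℂ) :
    sform (Hmat m l) (bld a b c) (bld a' b' c') =
      star a ⬝ᵥ c' - star b ⬝ᵥ b' + star c ⬝ᵥ a' := by
  rw [sform, Hmat_mulVec, star_bld, bld_dot]
  simp [dotProduct, mul_neg, sub_eq_add_neg]

lemma sform_psi (A : Matrix (Fin l) (Fin m) ℂ) (ε : ℂ) (u : Fin m → ℂ) :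
    sform (Hmat m l) (psi A ε u) (psi A ε u) = (ε + star ε) * (star u ⬝ᵥ u) := by
  rw [psi_apply, sform_bld]
  have k1 : star (Aᴴ *ᵥ (A *ᵥ u)) ⬝ᵥ u = star (A *ᵥ u) ⬝ᵥ (A *ᵥ u) := by
    rw [Matrix.star_mulVec, conjTranspose_conjTranspose, ← Matrix.dotProduct_mulVec]
  have k2 : star u ⬝ᵥ (Aᴴ *ᵥ (A *ᵥ u)) = star (A *ᵥ u) ⬝ᵥ (A *ᵥ u) := by
    rw [Matrix.dotProduct_mulVec, ← Matrix.star_mulVec]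
  have hhalf : star (1/2 : ℂ) = (1/2 : ℂ) := by
    simp [Complex.ext_iff]
  rw [star_add, star_smul, star_smul, add_dotProduct, dotProduct_add,
    smul_dotProduct, smul_dotProduct, dotProduct_smul, dotProduct_smul, k1, k2, hhalf]
  simp only [smul_eq_mul]
  ring

lemma psi_inj (A : Matrix (Fin l) (Fin m) ℂ) (ε : ℂ) : Function.Injective (psi A ε) := by
  intro u v h
  funext i
  exact congrFun h (inr (inr i))

lemma finrank_range_psi (A : Matrix (Fin l) (Fin m) ℂ) (ε : ℂ) :
    finrank ℂ (LinearMap.range (psi A ε)) = m := by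
  rw [LinearMap.finrank_range_of_inj (psi_inj A ε)]
  simp

lemma range_psi_le_FA (A : Matrix (Fin l) (Fin m) ℂ) (ε : ℂ) :
    LinearMap.range (psi A ε) ≤ FA m l A := by
  rintro _ ⟨u, rfl⟩
  rw [mem_FA]
  rfl

lemma inf_psi_bot (A : Matrix (Fin l) (Fin m) ℂ) :
    LinearMap.range (psi A 1) ⊓ LinearMap.range (psi A (-1)) = ⊥ := by
  rw [Submodule.eq_bot_iff]
  rintro x ⟨⟨u, hu⟩, ⟨v, hv⟩⟩
  have h3 : u = v := by
    funext i
    exact congrFun (hu.trans hv.symm) (inr (inr i))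
  subst h3
  have h1 : ∀ i, u i = 0 := by
    intro i
    have h := congrFun (hu.trans hv.symm) (inl i)
    simp only [psi_apply, bld_inl, Pi.add_apply, Pi.smul_apply, smul_eq_mul, one_mul,
      neg_mul, neg_smul, Pi.neg_apply] at h
    linear_combination h / 2
  rw [← hu, show u = 0 from funext fun i => h1 i, map_zero]

lemma sigOn_FA (A : Matrix (Fin l) (Fin m) ℂ) : SigOn (Hmat m l) (FA m l A) m m := by
  refine ⟨LinearMap.range (psi A 1), LinearMap.range (psi A (-1)),
    range_psi_le_FA A 1, range_psi_le_FA A (-1), finrank_range_psi A 1,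
    finrank_range_psi A (-1), ?_, ?_, inf_psi_bot A, ?_⟩
  · rintro _ ⟨u, rfl⟩ hne
    have hu : u ≠ 0 := by
      rintro rfl
      exact hne (map_zero _)
    rw [sform_psi, show ((1:ℂ) + star 1) = 2 by norm_num, Complex.mul_re]
    have := re_dot_pos u hu
    simp only [Complex.re_ofNat, Complex.im_ofNat, zero_mul, sub_zero]
    linarith
  · rintro _ ⟨u, rfl⟩ hne
    have hu : u ≠ 0 := by
      rintro rfl
      exact hne (map_zero _)
    rw [sform_psi, show ((-1:ℂ) + star (-1)) = -2 by norm_num, Complex.mul_re]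
    have := re_dot_pos u hu
    simp only [Complex.neg_re, Complex.re_ofNat, Complex.neg_im, Complex.im_ofNat, neg_zero,
      zero_mul, sub_zero]
    linarith
  · refine Submodule.eq_of_le_of_finrank_le
      (sup_le (range_psi_le_FA A 1) (range_psi_le_FA A (-1))) ?_
    have h := Submodule.finrank_sup_add_finrank_inf_eq
      (LinearMap.range (psi A 1)) (LinearMap.range (psi A (-1)))
    rw [inf_psi_bot A, finrank_bot, add_zero, finrank_range_psi, finrank_range_psi] at h
    rw [finrank_FA, h]
    ring_nf
    omega


lemma sform_re_nonpos_of_w3zero (w : (Fin m ⊕ (Fin l ⊕ Fin m)) → ℂ)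
    (h : ∀ i, w (inr (inr i)) = 0) : (sform (Hmat m l) w w).re ≤ 0 := by
  have hw : w = bld (fun i => w (inl i)) (fun j => w (inr (inl j))) 0 := by
    funext x; rcases x with i | (j | i) <;> simp [bld, h]
  rw [hw, sform_bld]
  simp only [dotProduct_zero, star_zero, zero_dotProduct, zero_sub, add_zero, Complex.neg_re]
  exact neg_nonpos.mpr (re_dot_nonneg _)

end Stmt12Aux

set_option synthInstance.maxHeartbeats 1000000 in
set_option maxHeartbeats 1000000 in
open Stmt12Aux Sum in
/-- The map `A ↦ (column span of [Aᴴ; 1; 0])^⊥` is a bijection from `M((n-m)×m, ℂ)` onto the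
set of `2m`-dimensional subspaces `V` of `ℂ^{m+n}` containing `v_∞` on which `h` has
signature `(m,m)`. Here `l = n - m`. -/
theorem stmt12 (m l : ℕ) :
    Set.BijOn
      (fun A : Matrix (Fin l) (Fin m) ℂ =>
        hperp (Hmat m l) (LinearMap.range (Matrix.mulVecLin
          (fromRows Aᴴ (fromRows (1 : Matrix (Fin l) (Fin l) ℂ)
            (0 : Matrix (Fin m) (Fin l) ℂ))))))
      Set.univ
      {V : Submodule ℂ ((Fin m ⊕ (Fin l ⊕ Fin m)) → ℂ) |
        vinf m l ≤ V ∧ finrank ℂ V = 2 * m ∧ SigOn (Hmat m l) V m m} := by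
  show Set.BijOn (fun A => FA m l A) Set.univ _
  refine ⟨?_, ?_, ?_⟩
  · -- MapsTo
    intro A _
    refine ⟨?_, finrank_FA A, sigOn_FA A⟩
    intro v hv
    rw [mem_vinf] at hv
    rw [mem_FA]
    funext j
    rw [hv.1 j]
    have : (fun i => v (inr (inr i))) = 0 := funext hv.2
    rw [this, Matrix.mulVec_zero]
    rfl
  · -- InjOn
    intro A _ B _ h
    have h' : FA m l A = FA m l B := h
    ext k j
    have hmem : bld 0 (A *ᵥ Pi.single j 1) (Pi.single j 1) ∈ FA m l A := by
      rw [mem_FA]; rfl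
    rw [h'] at hmem
    rw [mem_FA] at hmem
    have hk := congrFun hmem k
    simp only [bld_inrl, bld_inrr] at hk
    have e1 : (A *ᵥ Pi.single j 1) k = A k j := by
      simp [mulVec, dotProduct_single]
    have e2 : (B *ᵥ fun i => (Pi.single j 1 : Fin m → ℂ) i) k = B k j := by
      simp [mulVec, dotProduct_single]
    rw [e1, e2] at hk
    exact hk
  · -- SurjOn
    intro V hV
    obtain ⟨hle, hrk, P, N, hPle, hNle, hPrk, hNrk, hPpos, hNneg, hPN, hPsup⟩ := hV
    set pr3 : ((Fin m ⊕ (Fin l ⊕ Fin m)) → ℂ) →ₗ[ℂ] (Fin m → ℂ) :=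
      LinearMap.funLeft ℂ ℂ (fun i => inr (inr i)) with hpr3
    -- Step 1: vectors in V with vanishing third block lie in vinf
    have key : ∀ v ∈ V, (∀ i, v (inr (inr i)) = 0) → v ∈ vinf m l := by
      intro v hvV hv3
      rw [mem_vinf]
      refine ⟨?_, hv3⟩
      by_contra hcon
      push_neg at hcon
      obtain ⟨j0, hj0⟩ := hcon
      have hvne : v ≠ 0 := fun h0 => hj0 (by rw [h0]; rfl)
      have hv_not : v ∉ vinf m l := fun hm => hj0 (((mem_vinf v).1 hm).1 j0)
      have hvinf_ker : vinf m l ≤ LinearMap.ker pr3 := by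
        intro w hw
        rw [LinearMap.mem_ker]
        funext i
        exact ((mem_vinf w).1 hw).2 i
      have hvk : v ∈ LinearMap.ker pr3 := by
        rw [LinearMap.mem_ker]
        funext i
        exact hv3 i
      have hW_le : vinf m l ⊔ Submodule.span ℂ {v} ≤ V ⊓ LinearMap.ker pr3 :=
        sup_le (le_inf hle hvinf_ker)
          ((Submodule.span_singleton_le_iff_mem v _).mpr ⟨hvV, hvk⟩)
      have hdisj : Disjoint (vinf m l) (Submodule.span ℂ {v}) :=
        (Submodule.disjoint_span_singleton' hvne).mpr hv_not
      have hrkW : finrank ℂ ((vinf m l) ⊔ Submodule.span ℂ {v} : Submodule ℂ _) = m + 1 := by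
        have hh := Submodule.finrank_sup_add_finrank_inf_eq (vinf m l) (Submodule.span ℂ {v})
        rw [hdisj.eq_bot, finrank_bot, add_zero, finrank_vinf,
          finrank_span_singleton hvne] at hh
        exact hh
      have hnd : ¬ Disjoint P (V ⊓ LinearMap.ker pr3) := by
        intro hd
        have hsum := Submodule.finrank_sup_add_finrank_inf_eq P (V ⊓ LinearMap.ker pr3)
        rw [hd.eq_bot, finrank_bot, add_zero] at hsum
        have h1 : finrank ℂ ((P ⊔ (V ⊓ LinearMap.ker pr3)) : Submodule ℂ _) ≤ finrank ℂ V :=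
          Submodule.finrank_mono (sup_le hPle inf_le_left)
        have h2 : m + 1 ≤ finrank ℂ ((V ⊓ LinearMap.ker pr3) : Submodule ℂ _) := by
          rw [← hrkW]
          exact Submodule.finrank_mono hW_le
        omega
      rw [Submodule.disjoint_def] at hnd
      push_neg at hnd
      obtain ⟨p, hpP, hpZ, hp0⟩ := hnd
      have hpos := hPpos p hpP hp0
      have hneg : (sform (Hmat m l) p p).re ≤ 0 := by
        refine sform_re_nonpos_of_w3zero p fun i => ?_
        have hpk := LinearMap.mem_ker.mp hpZ.2
        exact congrFun hpk i
      linarith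
    -- Step 2: the third-block projection is surjective from V
    set f : V →ₗ[ℂ] (Fin m → ℂ) := pr3.comp V.subtype with hf
    have hkereq : LinearMap.ker f = Submodule.comap V.subtype (vinf m l) := by
      ext x
      rw [LinearMap.mem_ker, Submodule.mem_comap]
      constructor
      · intro hx
        exact key x.1 x.2 fun i => congrFun hx i
      · intro hx
        funext i
        exact ((mem_vinf _).1 hx).2 i
    have hkerrank : finrank ℂ (LinearMap.ker f) = m := by
      rw [hkereq, LinearEquiv.finrank_eq (Submodule.comapSubtypeEquivOfLe hle)]
      exact finrank_vinf
    have hrange : LinearMap.range f = ⊤ := by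
      have hrn := LinearMap.finrank_range_add_finrank_ker f
      rw [hkerrank] at hrn
      apply Submodule.eq_top_of_finrank_eq
      have : finrank ℂ (Fin m → ℂ) = m := by simp
      rw [this]
      have : finrank ℂ V = 2 * m := hrk
      omega
    have hsurj : ∀ j : Fin m, ∃ w, w ∈ V ∧ (fun i => w (inr (inr i))) = Pi.single j 1 := by
      intro j
      have : (Pi.single j 1 : Fin m → ℂ) ∈ LinearMap.range f := by
        rw [hrange]; trivial
      obtain ⟨x, hx⟩ := this
      exact ⟨x.1, x.2, hx⟩
    choose b hbV hb3 using hsurj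
    set A : Matrix (Fin l) (Fin m) ℂ := Matrix.of fun k j => b j (inr (inl k)) with hA
    have hVle : V ≤ FA m l A := by
      intro w hw
      rw [mem_FA]
      set w' := w - ∑ j, (w (inr (inr j))) • b j with hw'
      have hw'V : w' ∈ V :=
        Submodule.sub_mem _ hw (Submodule.sum_mem _ fun j _ => Submodule.smul_mem _ _ (hbV j))
      have hbji : ∀ j i, b j (inr (inr i)) = (Pi.single j 1 : Fin m → ℂ) i := by
        intro j i
        exact congrFun (hb3 j) i
      have hw'3 : ∀ i, w' (inr (inr i)) = 0 := by
        intro i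
        simp only [hw', Pi.sub_apply, Finset.sum_apply, Pi.smul_apply, smul_eq_mul]
        rw [Finset.sum_congr rfl fun j _ => by rw [hbji j i]]
        simp [Pi.single_apply]
      have hw'2 : ∀ j, w' (inr (inl j)) = 0 := ((mem_vinf w').1 (key w' hw'V hw'3)).1
      funext k
      have h2 := hw'2 k
      simp only [hw', Pi.sub_apply, Finset.sum_apply, Pi.smul_apply, smul_eq_mul,
        sub_eq_zero] at h2
      rw [h2]
      simp [hA, mulVec, dotProduct, mul_comm]
    have hfr : finrank ℂ (FA m l A) ≤ finrank ℂ V := by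
      rw [finrank_FA, hrk]
    exact ⟨A, Set.mem_univ A, (Submodule.eq_of_le_of_finrank_le hVle hfr).symm⟩
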